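/- Let F be a vector space with a basis B linearly ordered by a well-order, M ⊆ F a subspace, and D ⊆ B the set of monomials that occur as leading monomials of nonzero elements of M. Then the images of the monomials B \ D under the projection F → F/M form a basis of F/M. -/

import Mathlib

/-- The monomial basis of the quotient: let `F` be a vector space with a basis
`b` indexed by a well-ordered set of monomials and `M` a subspace; let `D` be
the set of monomials occurring as leading monomials (largest basis monomial of
the support) of nonzero elements of `M`. Then the images of the monomials not
in `D` under the projection `F → F/M` form a basis of `F/M`. -/
theorem quotient_basis_of_irreducible_monomials {k F ι : Type*} [Field k]
    [AddCommGroup F] [Module k F] [LinearOrder ι] [WellFoundedLT ι]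
    (b : Module.Basis ι k F) (M : Submodule k F) :
    ∃ c : Module.Basis
        {i : ι // i ∉ {i : ι | ∃ m ∈ M, m ≠ 0 ∧ i ∈ (b.repr m).support ∧
          ∀ j ∈ (b.repr m).support, j ≤ i}} k (F ⧸ M),
      ∀ i, c i = Submodule.Quotient.mk (b i.1) := by
  classical
  set D : Set ι := {i : ι | ∃ m ∈ M, m ≠ 0 ∧ i ∈ (b.repr m).support ∧
      ∀ j ∈ (b.repr m).support, j ≤ i} with hD
  set v : {i : ι // i ∉ D} → F ⧸ M := fun i => Submodule.Quotient.mk (b i.1) with hv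
  -- spanning
  have key : ∀ i : ι, ∀ f : F, (∀ j ∈ (b.repr f).support, j ≤ i) →
      Submodule.Quotient.mk (p := M) f ∈ Submodule.span k (Set.range v) := by
    intro i
    induction i using WellFoundedLT.induction with
    | _ i IH =>
    have step : ∀ g : F, (∀ j ∈ (b.repr g).support, j < i) →
        Submodule.Quotient.mk (p := M) g ∈ Submodule.span k (Set.range v) := by
      intro g hg
      by_cases hg0 : g = 0
      · simpa [hg0] using Submodule.zero_mem _
      have hne : ((b.repr g).support).Nonempty := by
        rw [Finsupp.support_nonempty_iff]
        simpa using hg0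
      exact IH _ (hg _ (Finset.max'_mem _ hne)) g
        (fun j hj => Finset.le_max' _ _ hj)
    intro f hf
    by_cases hf0 : f = 0
    · simpa [hf0] using Submodule.zero_mem _
    have hne : ((b.repr f).support).Nonempty := by
      rw [Finsupp.support_nonempty_iff]; simpa using hf0
    set i₀ : ι := ((b.repr f).support).max' hne with hi₀
    have hi₀le : i₀ ≤ i := hf _ (Finset.max'_mem _ hne)
    by_cases hiD : i₀ ∈ D
    · obtain ⟨m, hmM, hm0, hmem, hmax⟩ := hiD
      have hc : b.repr m i₀ ≠ 0 := Finsupp.mem_support_iff.mp hmem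
      set g : F := f - ((b.repr f i₀) / (b.repr m i₀)) • m with hg
      have hmk : Submodule.Quotient.mk (p := M) f = Submodule.Quotient.mk g := by
        rw [hg]
        rw [Submodule.Quotient.mk_sub]
        rw [(Submodule.Quotient.mk_eq_zero M).2 (Submodule.smul_mem _ _ hmM)]
        simp
      rw [hmk]
      apply step
      intro j hj
      have hrj : b.repr g j ≠ 0 := Finsupp.mem_support_iff.mp hj
      have hrg : b.repr g = b.repr f - ((b.repr f i₀) / (b.repr m i₀)) • b.repr m := by
        rw [hg]; simp
      have hji₀ : j ≤ i₀ := by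
        rw [hrg] at hrj
        simp only [Finsupp.sub_apply, Finsupp.smul_apply, smul_eq_mul] at hrj
        by_contra h
        push_neg at h
        have h1 : b.repr f j = 0 := by
          by_contra h1
          exact absurd (Finset.le_max' _ _ (Finsupp.mem_support_iff.mpr h1)) (not_le.mpr h)
        have h2 : b.repr m j = 0 := by
          by_contra h2
          exact absurd (hmax _ (Finsupp.mem_support_iff.mpr h2)) (not_le.mpr h)
        rw [h1, h2] at hrj
        simp at hrj
      have hjne : j ≠ i₀ := by
        intro hje
        apply hrj
        rw [hje, hrg]
        simp only [Finsupp.sub_apply, Finsupp.smul_apply, smul_eq_mul]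
        field_simp
        simp
      exact lt_of_lt_of_le (lt_of_le_of_ne hji₀ hjne) hi₀le
    · set g : F := f - (b.repr f i₀) • b i₀ with hg
      have hmk : Submodule.Quotient.mk (p := M) f
          = Submodule.Quotient.mk g + (b.repr f i₀) • v ⟨i₀, hiD⟩ := by
        rw [hg, hv]
        simp [Submodule.Quotient.mk_sub, Submodule.Quotient.mk_smul]
      rw [hmk]
      refine Submodule.add_mem _ ?_ (Submodule.smul_mem _ _
        (Submodule.subset_span ⟨⟨i₀, hiD⟩, rfl⟩))
      apply step
      intro j hj
      have hrj : b.repr g j ≠ 0 := Finsupp.mem_support_iff.mp hj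
      have hrg : b.repr g = b.repr f - (b.repr f i₀) • Finsupp.single i₀ 1 := by
        rw [hg]; simp [Module.Basis.repr_self]
      have hjne : j ≠ i₀ := by
        intro hje
        apply hrj
        rw [hje, hrg]
        simp
      have hji₀ : j ≤ i₀ := by
        apply Finset.le_max' _ _
        rw [Finsupp.mem_support_iff]
        intro h1
        apply hrj
        rw [hrg]
        simp [Finsupp.single_apply, hjne, h1, Ne.symm hjne]
      exact lt_of_lt_of_le (lt_of_le_of_ne hji₀ hjne) hi₀le
  have hspan : ⊤ ≤ Submodule.span k (Set.range v) := by
    rintro x -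
    obtain ⟨f, rfl⟩ := Submodule.Quotient.mk_surjective M x
    by_cases hf0 : f = 0
    · simpa [hf0] using Submodule.zero_mem _
    have hne : ((b.repr f).support).Nonempty := by
      rw [Finsupp.support_nonempty_iff]; simpa using hf0
    exact key (((b.repr f).support).max' hne) f (fun j hj => Finset.le_max' _ _ hj)
  have hli : LinearIndependent k v := by
    rw [linearIndependent_iff]
    intro l hl
    set m : F := Finsupp.linearCombination k (fun i : {i : ι // i ∉ D} => b i.1) l with hm
    have hmM : m ∈ M := by
      rw [← Submodule.Quotient.mk_eq_zero]
      have : Submodule.Quotient.mk (p := M) m = Finsupp.linearCombination k v l := by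
        rw [hm, hv]
        simp only [Finsupp.linearCombination_apply, Finsupp.sum]
        rw [← Submodule.mkQ_apply, map_sum]
        simp [Submodule.Quotient.mk_smul]
      rw [this, hl]
    by_contra hl0
    have hrm : b.repr m = Finsupp.embDomain ⟨Subtype.val, Subtype.val_injective⟩ l := by
      rw [Finsupp.embDomain_eq_mapDomain, hm]
      rw [Finsupp.linearCombination_apply, Finsupp.sum, map_sum, Finsupp.mapDomain, Finsupp.sum]
      simp [Module.Basis.repr_self, Finsupp.smul_single]
    have hsupp : (b.repr m).support = l.support.map ⟨Subtype.val, Subtype.val_injective⟩ := by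
      rw [hrm, Finsupp.support_embDomain]
    have hm0 : m ≠ 0 := by
      intro h
      apply hl0
      rw [h, map_zero] at hrm
      exact (Finsupp.embDomain_eq_zero.mp hrm.symm)
    have hne : ((b.repr m).support).Nonempty := by
      rw [Finsupp.support_nonempty_iff]; simpa using hm0
    set i₀ : ι := ((b.repr m).support).max' hne with hi₀
    have hi₀D : i₀ ∈ D := ⟨m, hmM, hm0, Finset.max'_mem _ hne,
      fun j hj => Finset.le_max' _ _ hj⟩
    have : i₀ ∈ l.support.map ⟨Subtype.val, Subtype.val_injective⟩ := by
      rw [← hsupp]; exact Finset.max'_mem _ hne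
    obtain ⟨a, _, ha⟩ := Finset.mem_map.mp this
    have ha' : (a : ι) = i₀ := ha
    exact a.2 (ha' ▸ hi₀D)
  refine ⟨Module.Basis.mk hli hspan, fun i => ?_⟩
  simp [Module.Basis.mk_apply, hv]
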